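/- Under the hypotheses above, the forms E^{(n)}(f) = 2^n⟨f − P_{2^{-n}}f, f⟩ converge to E in the sense of Mosco as n → ∞: (i) for any sequence f_n → f weakly in H, E(f) ≤ liminf_n E^{(n)}(f_n); (ii) for any f ∈ H there is a sequence f_n → f strongly with limsup_n E^{(n)}(f_n) ≤ E(f) (the constant sequence f_n = f works). -/

import Mathlib

open scoped ENNReal RealInnerProductSpace
open Filter Topology

section Aux

variable {H : Type*} [NormedAddCommGroup H] [InnerProductSpace ℝ H]
variable (P : ℝ → H →L[ℝ] H)

lemma ptContr (hcontr : ∀ t : ℝ, 0 ≤ t → ‖P t‖ ≤ 1) {t : ℝ} (ht : 0 ≤ t) (g : H) :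
    ‖P t g‖ ≤ ‖g‖ := by
  calc ‖P t g‖ ≤ ‖P t‖ * ‖g‖ := (P t).le_opNorm g
    _ ≤ 1 * ‖g‖ := mul_le_mul_of_nonneg_right (hcontr t ht) (norm_nonneg g)
    _ = ‖g‖ := one_mul _

lemma innerPP (hsemi : ∀ s t : ℝ, 0 ≤ s → 0 ≤ t → P (s + t) = (P s).comp (P t))
    (hsym : ∀ t : ℝ, 0 ≤ t → ∀ u v : H, ⟪P t u, v⟫ = ⟪u, P t v⟫)
    {u v : ℝ} (hu : 0 ≤ u) (hv : 0 ≤ v) (g : H) :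
    ⟪P u g, P v g⟫ = ⟪P (u + v) g, g⟫ := by
  rw [hsym u hu, ← ContinuousLinearMap.comp_apply, ← hsemi u v hu hv, real_inner_comm]

lemma qNonneg (hcontr : ∀ t : ℝ, 0 ≤ t → ‖P t‖ ≤ 1) {t : ℝ} (ht : 0 ≤ t) (g : H) :
    0 ≤ ⟪g - P t g, g⟫ := by
  rw [inner_sub_left]
  have h1 : ⟪P t g, g⟫ ≤ ‖P t g‖ * ‖g‖ := real_inner_le_norm _ _
  have h2 : ‖P t g‖ * ‖g‖ ≤ ‖g‖ * ‖g‖ :=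
    mul_le_mul_of_nonneg_right (ptContr P hcontr ht g) (norm_nonneg g)
  have h3 : ⟪g, g⟫ = ‖g‖ * ‖g‖ := real_inner_self_eq_norm_mul_norm g
  linarith

lemma psiEq (hsemi : ∀ s t : ℝ, 0 ≤ s → 0 ≤ t → P (s + t) = (P s).comp (P t))
    (hsym : ∀ t : ℝ, 0 ≤ t → ∀ u v : H, ⟪P t u, v⟫ = ⟪u, P t v⟫)
    {t : ℝ} (ht : 0 ≤ t) (g : H) :
    ⟪g - P t g, g⟫ = ⟪g, g⟫ - ⟪P (t/2) g, P (t/2) g⟫ := by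
  rw [inner_sub_left, innerPP P hsemi hsym (by linarith) (by linarith) g]
  norm_num

lemma Nmono (hsemi : ∀ s t : ℝ, 0 ≤ s → 0 ≤ t → P (s + t) = (P s).comp (P t))
    (hcontr : ∀ t : ℝ, 0 ≤ t → ‖P t‖ ≤ 1)
    {u h : ℝ} (hu : 0 ≤ u) (hh : 0 ≤ h) (g : H) :
    ⟪P (u + h) g, P (u + h) g⟫ ≤ ⟪P u g, P u g⟫ := by
  rw [real_inner_self_eq_norm_mul_norm, real_inner_self_eq_norm_mul_norm]
  have : ‖P (u + h) g‖ ≤ ‖P u g‖ := by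
    rw [add_comm, hsemi h u hh hu]
    exact ptContr P hcontr hh (P u g)
  exact mul_le_mul this this (norm_nonneg _) (norm_nonneg _)

lemma Nconvex (hsemi : ∀ s t : ℝ, 0 ≤ s → 0 ≤ t → P (s + t) = (P s).comp (P t))
    (hsym : ∀ t : ℝ, 0 ≤ t → ∀ u v : H, ⟪P t u, v⟫ = ⟪u, P t v⟫)
    {u h : ℝ} (hu : 0 ≤ u) (hh : 0 ≤ h) (g : H) :
    2 * ⟪P (u + h) g, P (u + h) g⟫ ≤ ⟪P u g, P u g⟫ + ⟪P (u + 2*h) g, P (u + 2*h) g⟫ := by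
  have h1 : ⟪P (u + h) g, P (u + h) g⟫ = ⟪P u g, P (u + 2*h) g⟫ := by
    rw [innerPP P hsemi hsym (by linarith) (by linarith) g,
        innerPP P hsemi hsym hu (by linarith) g]
    ring_nf
  have h2 : (0:ℝ) ≤ ⟪P u g - P (u + 2*h) g, P u g - P (u + 2*h) g⟫ := real_inner_self_nonneg
  rw [inner_sub_left, inner_sub_right, inner_sub_right,
      real_inner_comm (P (u + 2*h) g) (P u g)] at h2
  have h3 := real_inner_comm (P u g) (P (u + 2*h) g)
  linarith

lemma Ddecr (hsemi : ∀ s t : ℝ, 0 ≤ s → 0 ≤ t → P (s + t) = (P s).comp (P t))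
    (hsym : ∀ t : ℝ, 0 ≤ t → ∀ u v : H, ⟪P t u, v⟫ = ⟪u, P t v⟫)
    {h : ℝ} (hh : 0 ≤ h) (g : H) : ∀ k : ℕ,
    ⟪P ((k:ℝ)*h) g, P ((k:ℝ)*h) g⟫ - ⟪P (((k:ℝ)+1)*h) g, P (((k:ℝ)+1)*h) g⟫ ≤
      ⟪P 0 g, P 0 g⟫ - ⟪P h g, P h g⟫ := by
  intro k
  induction k with
  | zero => norm_num
  | succ k ih =>
    have hc := Nconvex P hsemi hsym (u := (k:ℝ)*h) (h := h)
      (by positivity) hh g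
    have e1 : (k:ℝ)*h + h = ((k:ℝ)+1)*h := by ring
    have e2 : (k:ℝ)*h + 2*h = (((k:ℝ)+1)+1)*h := by ring
    rw [e1, e2] at hc
    push_cast
    linarith

lemma NScale (hsemi : ∀ s t : ℝ, 0 ≤ s → 0 ≤ t → P (s + t) = (P s).comp (P t))
    (hsym : ∀ t : ℝ, 0 ≤ t → ∀ u v : H, ⟪P t u, v⟫ = ⟪u, P t v⟫)
    {h : ℝ} (hh : 0 ≤ h) (g : H) : ∀ k : ℕ,
    ⟪P 0 g, P 0 g⟫ - ⟪P ((k:ℝ)*h) g, P ((k:ℝ)*h) g⟫ ≤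
      (k:ℝ) * (⟪P 0 g, P 0 g⟫ - ⟪P h g, P h g⟫) := by
  intro k
  induction k with
  | zero => norm_num
  | succ k ih =>
    have hd := Ddecr P hsemi hsym hh g k
    push_cast
    push_cast at ih
    linarith

lemma psiScale (hP0 : P 0 = ContinuousLinearMap.id ℝ H)
    (hsemi : ∀ s t : ℝ, 0 ≤ s → 0 ≤ t → P (s + t) = (P s).comp (P t))
    (hsym : ∀ t : ℝ, 0 ≤ t → ∀ u v : H, ⟪P t u, v⟫ = ⟪u, P t v⟫)
    (k : ℕ) {s : ℝ} (hs : 0 ≤ s) (g : H) :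
    ⟪g - P ((k:ℝ)*s) g, g⟫ ≤ (k:ℝ) * ⟪g - P s g, g⟫ := by
  have hg : ⟪g, g⟫ = ⟪P 0 g, P 0 g⟫ := by rw [hP0]; rfl
  rw [psiEq P hsemi hsym (by positivity) g, psiEq P hsemi hsym hs g, hg]
  have e1 : ((k:ℝ)*s)/2 = (k:ℝ)*(s/2) := by ring
  rw [e1]
  exact NScale P hsemi hsym (by linarith) g k

lemma psiMono (hsemi : ∀ s t : ℝ, 0 ≤ s → 0 ≤ t → P (s + t) = (P s).comp (P t))
    (hsym : ∀ t : ℝ, 0 ≤ t → ∀ u v : H, ⟪P t u, v⟫ = ⟪u, P t v⟫)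
    (hcontr : ∀ t : ℝ, 0 ≤ t → ‖P t‖ ≤ 1)
    {t t' : ℝ} (ht : 0 ≤ t) (htt' : t ≤ t') (g : H) :
    ⟪g - P t g, g⟫ ≤ ⟪g - P t' g, g⟫ := by
  rw [psiEq P hsemi hsym ht g, psiEq P hsemi hsym (by linarith) g]
  have := Nmono P hsemi hcontr (u := t/2) (h := (t'-t)/2) (by linarith) (by linarith) g
  have e : t/2 + (t'-t)/2 = t'/2 := by ring
  rw [e] at this
  linarith

lemma compare (hP0 : P 0 = ContinuousLinearMap.id ℝ H)
    (hsemi : ∀ s t : ℝ, 0 ≤ s → 0 ≤ t → P (s + t) = (P s).comp (P t))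
    (hsym : ∀ t : ℝ, 0 ≤ t → ∀ u v : H, ⟪P t u, v⟫ = ⟪u, P t v⟫)
    (hcontr : ∀ t : ℝ, 0 ≤ t → ‖P t‖ ≤ 1)
    {s t : ℝ} (hs : 0 < s) (ht : 0 < t) (g : H) :
    t⁻¹ * ⟪g - P t g, g⟫ ≤ (1 + s/t) * (s⁻¹ * ⟪g - P s g, g⟫) := by
  set k := ⌈t/s⌉₊ with hk
  have hts : 0 < t/s := by positivity
  have hk1 : t ≤ (k:ℝ) * s := by
    have := Nat.le_ceil (t/s)
    calc t = (t/s) * s := by field_simp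
      _ ≤ (k:ℝ) * s := mul_le_mul_of_nonneg_right this hs.le
  have hk2 : (k:ℝ) < t/s + 1 := by
    have := Nat.ceil_lt_add_one hts.le
    exact_mod_cast this
  have hmono := psiMono P hsemi hsym hcontr ht.le hk1 g
  have hscale := psiScale P hP0 hsemi hsym k hs.le g
  have hq : 0 ≤ ⟪g - P s g, g⟫ := qNonneg P hcontr hs.le g
  have h1 : ⟪g - P t g, g⟫ ≤ (t/s + 1) * ⟪g - P s g, g⟫ := by
    calc ⟪g - P t g, g⟫ ≤ (k:ℝ) * ⟪g - P s g, g⟫ := le_trans hmono hscale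
      _ ≤ (t/s + 1) * ⟪g - P s g, g⟫ := mul_le_mul_of_nonneg_right hk2.le hq
  have halg : t⁻¹ * ((t/s + 1) * ⟪g - P s g, g⟫)
      = (1 + s/t) * (s⁻¹ * ⟪g - P s g, g⟫) := by
    field_simp
  calc t⁻¹ * ⟪g - P t g, g⟫ ≤ t⁻¹ * ((t/s + 1) * ⟪g - P s g, g⟫) := by
        apply mul_le_mul_of_nonneg_left h1 (by positivity)
    _ = (1 + s/t) * (s⁻¹ * ⟪g - P s g, g⟫) := halg

lemma csIneq (hcontr : ∀ t : ℝ, 0 ≤ t → ‖P t‖ ≤ 1)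
    (hsym : ∀ t : ℝ, 0 ≤ t → ∀ u v : H, ⟪P t u, v⟫ = ⟪u, P t v⟫)
    {t : ℝ} (ht : 0 ≤ t) (x g : H) (hc : 0 < ⟪g - P t g, g⟫) :
    ⟪x - P t x, g⟫^2 ≤ ⟪x - P t x, x⟫ * ⟪g - P t g, g⟫ := by
  have hq0 : ∀ μ : ℝ, 0 ≤ ⟪x - P t x, x⟫ - 2*μ*⟪x - P t x, g⟫ + μ^2*⟪g - P t g, g⟫ := by
    intro μ
    have hexp : ⟪(x - μ • g) - P t (x - μ • g), x - μ • g⟫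
        = ⟪x - P t x, x⟫ - 2*μ*⟪x - P t x, g⟫ + μ^2*⟪g - P t g, g⟫ := by
      simp only [map_sub, map_smul, inner_sub_left, inner_sub_right,
        real_inner_smul_left, real_inner_smul_right]
      linear_combination - μ * real_inner_comm x g - μ * hsym t ht x g
        + μ * real_inner_comm x (P t g)
    have h0 := qNonneg P hcontr ht (x - μ • g)
    rw [hexp] at h0
    exact h0
  have key := hq0 (⟪x - P t x, g⟫ / ⟪g - P t g, g⟫)
  have hmul := mul_nonneg key hc.le
  have e : (⟪x - P t x, x⟫ - 2*(⟪x - P t x, g⟫ / ⟪g - P t g, g⟫)*⟪x - P t x, g⟫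
      + (⟪x - P t x, g⟫ / ⟪g - P t g, g⟫)^2*⟪g - P t g, g⟫) * ⟪g - P t g, g⟫
      = ⟪x - P t x, x⟫ * ⟪g - P t g, g⟫ - ⟪x - P t x, g⟫^2 := by
    field_simp
    ring
  rw [e] at hmul
  linarith

end Aux
/-- The bounded forms `E⁽ⁿ⁾(f) = 2ⁿ⟨f − P_{2⁻ⁿ} f, f⟩` converge to the closed
form `E` of the generator in the sense of Mosco. -/
theorem stmt9 {H : Type*} [NormedAddCommGroup H] [InnerProductSpace ℝ H]
    [CompleteSpace H] [TopologicalSpace.SeparableSpace H]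
    (P : ℝ → H →L[ℝ] H)
    (hP0 : P 0 = ContinuousLinearMap.id ℝ H)
    (hsemi : ∀ s t : ℝ, 0 ≤ s → 0 ≤ t → P (s + t) = (P s).comp (P t))
    (hsym : ∀ t : ℝ, 0 ≤ t → ∀ u v : H, ⟪P t u, v⟫ = ⟪u, P t v⟫)
    (hcontr : ∀ t : ℝ, 0 ≤ t → ‖P t‖ ≤ 1)
    (hcont : ∀ f : H, ContinuousOn (fun t => P t f) (Set.Ici (0 : ℝ))) :
    let En : ℕ → H → ℝ≥0∞ := fun n g =>
      ENNReal.ofReal ((2 : ℝ) ^ n * ⟪g - P ((2 : ℝ) ^ (-(n : ℤ))) g, g⟫)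
    let E : H → ℝ≥0∞ := fun g =>
      ⨆ (t : ℝ) (_ : 0 < t), ENNReal.ofReal (t⁻¹ * ⟪g - P t g, g⟫)
    (∀ (f : ℕ → H) (g : H),
      (∀ y : H, Tendsto (fun n => ⟪f n, y⟫) atTop (nhds ⟪g, y⟫)) →
      E g ≤ liminf (fun n => En n (f n)) atTop) ∧
    (∀ g : H, ∃ f : ℕ → H, Tendsto f atTop (nhds g) ∧
      limsup (fun n => En n (f n)) atTop ≤ E g) := by
  intro En E
  have hEn : ∀ n (x : H), En n x
      = ENNReal.ofReal ((((2:ℝ) ^ (-(n:ℤ)))⁻¹) * ⟪x - P ((2:ℝ) ^ (-(n:ℤ))) x, x⟫) := by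
    intro n x
    have h2 : (((2:ℝ) ^ (-(n:ℤ)))⁻¹) = (2:ℝ) ^ n := by
      rw [zpow_neg, inv_inv, zpow_natCast]
    simp only [En, h2]
  constructor
  · -- part (i)
    intro f g hweak
    simp only [E]
    refine iSup₂_le fun t ht => ?_
    have hc0 : 0 ≤ ⟪g - P t g, g⟫ := qNonneg P hcontr ht.le g
    rcases eq_or_lt_of_le hc0 with h0 | hcpos
    · rw [← h0, mul_zero, ENNReal.ofReal_zero]
      exact zero_le
    · set c := ⟪g - P t g, g⟫ with hc
      set L := liminf (fun n => En n (f n)) atTop with hL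
      have hB : Tendsto (fun n => ⟪f n - P t (f n), g⟫) atTop (nhds c) := by
        have h1 : ∀ n, ⟪f n - P t (f n), g⟫ = ⟪f n, g⟫ - ⟪f n, P t g⟫ := by
          intro n; rw [inner_sub_left, hsym t ht.le]
        have hc' : c = ⟪g, g⟫ - ⟪g, P t g⟫ := by
          rw [hc, inner_sub_left, real_inner_comm g (P t g)]
        rw [hc']
        simpa only [h1] using (hweak g).sub (hweak (P t g))
      have main : ∀ k : ℕ,
          ENNReal.ofReal ((1 - 1/((k:ℝ)+1))^2 * ((1 + 1/((k:ℝ)+1))⁻¹ * (t⁻¹ * c))) ≤ L := by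
        intro k
        set ε : ℝ := 1/((k:ℝ)+1) with hε
        have hε0 : 0 < ε := by positivity
        have hε1 : ε ≤ 1 := by
          rw [hε, div_le_one (by positivity)]
          linarith [Nat.cast_nonneg (α := ℝ) k]
        have hev1 : ∀ᶠ n : ℕ in atTop, (2:ℝ)^(-(n:ℤ)) ≤ ε * t := by
          have htend : Tendsto (fun n : ℕ => (2:ℝ)^(-(n:ℤ))) atTop (nhds 0) := by
            have he : ∀ n : ℕ, (2:ℝ)^(-(n:ℤ)) = (1/2:ℝ)^n := fun n => by
              rw [zpow_neg, zpow_natCast, one_div, inv_pow]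
            simp only [he]
            exact tendsto_pow_atTop_nhds_zero_of_lt_one
              (by norm_num : (0:ℝ) ≤ 1/2) (by norm_num : (1/2:ℝ) < 1)
          exact htend.eventually (eventually_le_nhds (by positivity))
        have hev2 : ∀ᶠ n : ℕ in atTop, (1-ε)*c ≤ ⟪f n - P t (f n), g⟫ := by
          refine hB.eventually (eventually_ge_nhds ?_)
          nlinarith
        refine le_liminf_of_le (by isBoundedDefault) ?_
        filter_upwards [hev1, hev2] with n h1 h2
        rw [hEn]
        set s : ℝ := (2:ℝ)^(-(n:ℤ)) with hs
        have hs0 : 0 < s := by positivity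
        apply ENNReal.ofReal_le_ofReal
        have hq := csIneq P hcontr hsym ht.le (f n) g hcpos
        have hBn : 0 ≤ (1-ε)*c := mul_nonneg (by linarith) hc0
        have hB2 : ((1-ε)*c)^2 ≤ ⟪f n - P t (f n), g⟫^2 := by
          apply pow_le_pow_left₀ hBn h2
        have hqn : (1-ε)^2 * c ≤ ⟪f n - P t (f n), f n⟫ := by
          have hq2 : ((1-ε)*c)^2 ≤ ⟪f n - P t (f n), f n⟫ * c := le_trans hB2 hq
          nlinarith
        have hcomp := compare P hP0 hsemi hsym hcontr hs0 ht (f n)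
        have hst : 1 + s/t ≤ 1 + ε := by
          have : s/t ≤ ε := (div_le_iff₀ ht).mpr (by linarith)
          linarith
        have hψs : 0 ≤ s⁻¹ * ⟪f n - P s (f n), f n⟫ :=
          mul_nonneg (inv_nonneg.mpr hs0.le) (qNonneg P hcontr hs0.le (f n))
        have h3 : t⁻¹ * ⟪f n - P t (f n), f n⟫ ≤ (1+ε) * (s⁻¹ * ⟪f n - P s (f n), f n⟫) :=
          le_trans hcomp (mul_le_mul_of_nonneg_right hst hψs)
        have h4 : (1-ε)^2 * (t⁻¹ * c) ≤ t⁻¹ * ⟪f n - P t (f n), f n⟫ := by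
          have h5 := mul_le_mul_of_nonneg_left hqn (inv_nonneg.mpr ht.le)
          nlinarith
        have h6 : (1-ε)^2 * (t⁻¹ * c) ≤ (1+ε) * (s⁻¹ * ⟪f n - P s (f n), f n⟫) :=
          le_trans h4 h3
        calc (1-ε)^2 * ((1+ε)⁻¹ * (t⁻¹ * c))
            = (1+ε)⁻¹ * ((1-ε)^2 * (t⁻¹ * c)) := by ring
          _ ≤ (1+ε)⁻¹ * ((1+ε) * (s⁻¹ * ⟪f n - P s (f n), f n⟫)) :=
              mul_le_mul_of_nonneg_left h6 (by positivity)
          _ = s⁻¹ * ⟪f n - P s (f n), f n⟫ := by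
              field_simp
      have htendΨ : Tendsto (fun k : ℕ =>
          ENNReal.ofReal ((1 - 1/((k:ℝ)+1))^2 * ((1 + 1/((k:ℝ)+1))⁻¹ * (t⁻¹ * c))))
          atTop (nhds (ENNReal.ofReal (t⁻¹ * c))) := by
        have hreal : Tendsto (fun k : ℕ =>
            (1 - 1/((k:ℝ)+1))^2 * ((1 + 1/((k:ℝ)+1))⁻¹ * (t⁻¹ * c)))
            atTop (nhds (t⁻¹ * c)) := by
          have h0 : Tendsto (fun k : ℕ => 1/((k:ℝ)+1)) atTop (nhds 0) :=
            tendsto_one_div_add_atTop_nhds_zero_nat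
          have hone : Tendsto (fun _ : ℕ => (1:ℝ)) atTop (nhds 1) := tendsto_const_nhds
          have hcst : Tendsto (fun _ : ℕ => t⁻¹ * c) atTop (nhds (t⁻¹ * c)) :=
            tendsto_const_nhds
          have := ((hone.sub h0).pow 2).mul (((hone.add h0).inv₀ (by norm_num)).mul hcst)
          simpa using this
        exact (ENNReal.continuous_ofReal.tendsto _).comp hreal
      exact le_of_tendsto' htendΨ main
  · -- part (ii)
    intro g
    refine ⟨fun _ => g, tendsto_const_nhds, ?_⟩
    refine limsup_le_of_le (by isBoundedDefault) (Eventually.of_forall fun n => ?_)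
    have hs0 : (0:ℝ) < (2:ℝ)^(-(n:ℤ)) := by positivity
    calc En n g
        = ENNReal.ofReal ((((2:ℝ)^(-(n:ℤ)))⁻¹) * ⟪g - P ((2:ℝ)^(-(n:ℤ))) g, g⟫) := hEn n g
      _ ≤ E g := le_iSup₂ (f := fun (t : ℝ) (_ : 0 < t) =>
          ENNReal.ofReal (t⁻¹ * ⟪g - P t g, g⟫)) ((2:ℝ)^(-(n:ℤ))) hs0
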